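/- arXiv:0705.4681 — 3 statements merged into one kernel-verified Lean document; each statement's English description precedes it below -/
import Mathlib

section
/- For a free group F(a_1,...,a_k) with k ≥ 2, the number of cyclically reduced words of length n is exactly (2k-1)^n + 1 + (k-1)(1 + (-1)^n). -/
open Filter

/-- The alphabet `{a_1,...,a_k}^{±1}` of the free group `F(a_1,...,a_k)`. -/
abbrev Letter (k : ℕ) := Fin k × Bool

/-- Formal inverse of a letter. -/
def linv {k : ℕ} (x : Letter k) : Letter k := (x.1, !x.2)

/-- A word is freely reduced if no letter is followed by its inverse. -/
def Reduced {k : ℕ} (w : List (Letter k)) : Prop :=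
  w.Chain' (fun x y => y ≠ linv x)

/-- A word is cyclically reduced if all its cyclic permutations are reduced. -/
def CyclRed {k : ℕ} (w : List (Letter k)) : Prop :=
  ∀ r : ℕ, Reduced (w.rotate r)

/-- The set of cyclically reduced words in `F(a_1,...,a_k)`. -/
def Ck (k : ℕ) : Set (List (Letter k)) := {w | CyclRed w}

/-- `gam Q n` is the number of words of length `n` in `Q`. -/
noncomputable def gam {k : ℕ} (Q : Set (List (Letter k))) (n : ℕ) : ℕ :=
  Nat.card {w : List (Letter k) // w ∈ Q ∧ w.length = n}

-- ### Auxiliary development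

instance {k : ℕ} : DecidablePred (@Reduced k) :=
  fun w => inferInstanceAs (Decidable (w.IsChain _))

@[simp] lemma linv_linv {k : ℕ} (x : Letter k) : linv (linv x) = x := by simp [linv]

lemma ne_linv_self {k : ℕ} (x : Letter k) : x ≠ linv x := by
  intro h; have := congrArg Prod.snd h; simp [linv] at this

lemma linv_injective {k : ℕ} : Function.Injective (@linv k) := by
  intro a b h; have := congrArg linv h; simpa using this

/-- length-`n` words -/
abbrev LVec (k n : ℕ) := {l : List (Letter k) // l.length = n}

instance {k n : ℕ} : Fintype (LVec k n) := inferInstanceAs (Fintype (List.Vector (Letter k) n))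

/-- Counting vehicle: the number of lists of length `n` satisfying `p`. -/
def cnt (k n : ℕ) (p : List (Letter k) → Prop) [DecidablePred p] : ℕ :=
  ((Finset.univ : Finset (LVec k n)).filter (fun v => p v.1)).card

def GoodP {k : ℕ} (w : List (Letter k)) : Prop :=
  Reduced w ∧ w.head? ≠ w.getLast?.map linv

def BadP {k : ℕ} (w : List (Letter k)) : Prop :=
  Reduced w ∧ w.head? = w.getLast?.map linv

def DgP {k : ℕ} (w : List (Letter k)) : Prop :=
  Reduced w ∧ w.getLast? = w.head?

def EP {k : ℕ} (w : List (Letter k)) : Prop :=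
  Reduced w ∧ w.getLast? ≠ w.head?

instance {k} : DecidablePred (@GoodP k) := fun _ => inferInstanceAs (Decidable (_ ∧ _))
instance {k} : DecidablePred (@BadP k) := fun _ => inferInstanceAs (Decidable (_ ∧ _))
instance {k} : DecidablePred (@DgP k) := fun _ => inferInstanceAs (Decidable (_ ∧ _))
instance {k} : DecidablePred (@EP k) := fun _ => inferInstanceAs (Decidable (_ ∧ _))

lemma head?_take_one {α : Type*} {l : List α} {s : ℕ} (hs : 1 ≤ s) :
    (l.take s).head? = l.head? := by
  cases l with
  | nil => simp
  | cons a t => cases s with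
    | zero => omega
    | succ s => simp

lemma getLast?_drop' {α : Type*} {l : List α} {s : ℕ} (hs : s < l.length) :
    (l.drop s).getLast? = l.getLast? := by
  conv_rhs => rw [← List.take_append_drop s l]
  rw [List.getLast?_append_of_ne_nil]
  intro h
  have := congrArg List.length h
  simp at this; omega

lemma cyclRed_iff {k : ℕ} {w : List (Letter k)} (hw : w ≠ []) :
    CyclRed w ↔ GoodP w := by
  have hlen : 0 < w.length := List.length_pos_iff.mpr hw
  have hh := List.head?_eq_head (l := w) hw
  have hl := List.getLast?_eq_getLast_of_ne_nil (l := w) hw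
  constructor
  · intro h
    have hred : Reduced w := by have := h 0; rwa [List.rotate_zero] at this
    refine ⟨hred, ?_⟩
    rcases Nat.lt_or_ge 1 w.length with h2 | h2
    · -- length ≥ 2 : use rotation by 1
      have h1 := h 1
      rw [List.rotate_eq_drop_append_take (by omega)] at h1
      have key := (List.isChain_append.mp h1).2.2
      have hx : (w.drop 1).getLast? = some (w.getLast hw) := by
        rw [getLast?_drop' (by omega), hl]
      have hy : (w.take 1).head? = some (w.head hw) := by
        rw [head?_take_one le_rfl, hh]
      have := key _ (by rw [hx]; rfl) _ (by rw [hy]; rfl)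
      rw [hh, hl]
      simp only [Option.map_some, ne_eq, Option.some.injEq]
      exact this
    · -- length = 1
      have h1 : w.length = 1 := by omega
      rcases w with _ | ⟨a, t⟩
      · exact absurd rfl hw
      · have ht : t = [] := by simpa using h1
        subst ht
        simpa using ne_linv_self a
  · rintro ⟨hred, hwrap⟩ r
    rw [← List.rotate_mod]
    have hslt : r % w.length < w.length := Nat.mod_lt _ hlen
    rw [List.rotate_eq_drop_append_take hslt.le]
    apply List.isChain_append.mpr
    refine ⟨hred.suffix (List.drop_suffix _ _), hred.prefix (List.take_prefix _ _), ?_⟩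
    intro x hx y hy
    rcases Nat.eq_zero_or_pos (r % w.length) with h0 | h0
    · rw [h0] at hy; simp at hy
    · rw [getLast?_drop' hslt, hl] at hx
      rw [head?_take_one h0, hh] at hy
      simp only [Option.mem_def, Option.some.injEq] at hx hy
      subst hx; subst hy
      intro hcontr
      apply hwrap
      rw [hh, hl, hcontr]; rfl

lemma reduced_concat_iff {k : ℕ} {w : List (Letter k)} {y : Letter k} :
    Reduced (w ++ [y]) ↔ Reduced w ∧ ∀ x ∈ w.getLast?, y ≠ linv x := by
  unfold Reduced List.Chain'; rw [List.isChain_append]; simp [Reduced]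

-- cardinality of the alphabet
lemma card_letter (k : ℕ) : Fintype.card (Letter k) = 2 * k := by
  simp [Fintype.card_prod, mul_comm]

lemma card_vector_letter (k n : ℕ) :
    Fintype.card (LVec k n) = (2 * k) ^ n := by
  rw [show Fintype.card (LVec k n) = Fintype.card (List.Vector (Letter k) n) from rfl,
    card_vector, card_letter]

lemma cnt_congr {k n : ℕ} {p q : List (Letter k) → Prop} [DecidablePred p] [DecidablePred q]
    (h : ∀ w : List (Letter k), w.length = n → (p w ↔ q w)) : cnt k n p = cnt k n q := by
  unfold cnt
  congr 1
  apply Finset.filter_congr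
  intro v _
  simpa using h v.1 v.2

lemma cnt_split (k n : ℕ) (p q : List (Letter k) → Prop) [DecidablePred p] [DecidablePred q] :
    cnt k n (fun w => p w ∧ q w) + cnt k n (fun w => p w ∧ ¬ q w) = cnt k n p := by
  unfold cnt
  rw [← Finset.card_filter_add_card_filter_not
    (p := fun v : LVec k n => q v.1)
    (s := Finset.univ.filter fun v => p v.1)]
  simp [Finset.filter_filter]

/-- drop-last map on vectors -/
def dLast {k n : ℕ} (v : LVec k (n + 1)) : LVec k n :=
  ⟨v.1.dropLast, by rw [List.length_dropLast, v.2]; rfl⟩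

lemma vec_ne_nil {k n : ℕ} (hn : 1 ≤ n) (v : LVec k n) : v.1 ≠ [] := by
  intro h
  have := v.2
  rw [h] at this
  simp at this
  omega

lemma cnt_red (k n : ℕ) : cnt k (n + 1) Reduced = (2 * k) * (2 * k - 1) ^ n := by
  induction n with
  | zero =>
    unfold cnt
    rw [Finset.filter_true_of_mem, Finset.card_univ, card_vector_letter]
    · ring
    · intro v _
      rcases v with ⟨_ | ⟨a, _ | ⟨b, t⟩⟩, hv⟩
      · simp at hv
      · simp [Reduced, List.Chain']
      · simp at hv
  | succ n ih =>
    have key : cnt k (n + 2) Reduced = cnt k (n + 1) Reduced * (2 * k - 1) := by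
      unfold cnt
      rw [Finset.card_eq_sum_card_fiberwise (f := dLast)
        (t := Finset.univ.filter fun v : LVec k (n+1) => Reduced v.1)]
      · rw [Finset.sum_congr rfl (g := fun _ => 2 * k - 1), Finset.sum_const, smul_eq_mul]
        intro u hu
        simp only [Finset.mem_filter, Finset.mem_univ, true_and] at hu
        have hne : u.1 ≠ [] := vec_ne_nil (by omega) u
        rw [Finset.card_bij' (i := fun v _ => v.1.getLast (vec_ne_nil (by omega) v))
          (j := fun y _ => (⟨u.1 ++ [y], by simp [u.2]⟩ : LVec k (n+2)))
          (t := Finset.univ.erase (linv (u.1.getLast hne)))]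
        · rw [Finset.card_erase_of_mem (Finset.mem_univ _), Finset.card_univ, card_letter]
        · -- hi
          intro v hv
          simp only [Finset.mem_filter, Finset.mem_univ, true_and] at hv
          obtain ⟨hred, hdrop⟩ := hv
          have hvne : v.1 ≠ [] := vec_ne_nil (by omega) v
          have hsplit : v.1.dropLast ++ [v.1.getLast hvne] = v.1 :=
            List.dropLast_append_getLast hvne
          rw [← hsplit] at hred
          obtain ⟨-, hcond⟩ := reduced_concat_iff.mp hred
          have hdl : v.1.dropLast = u.1 := congrArg Subtype.val hdrop
          rw [hdl] at hcond
          have := hcond _ (List.getLast?_eq_getLast_of_ne_nil hne)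
          simp only [Finset.mem_erase, Finset.mem_univ, and_true]
          exact this
        · -- hj
          intro y hy
          simp only [Finset.mem_erase, Finset.mem_univ, and_true] at hy
          simp only [Finset.mem_filter, Finset.mem_univ, true_and]
          constructor
          · exact reduced_concat_iff.mpr ⟨hu, by
              intro x hx
              rw [List.getLast?_eq_getLast_of_ne_nil hne] at hx
              cases hx
              exact hy⟩
          · apply Subtype.ext
            simp [dLast]
        · -- left inverse
          intro v hv
          simp only [Finset.mem_filter, Finset.mem_univ, true_and] at hv
          apply Subtype.ext
          have hdl : v.1.dropLast = u.1 := congrArg Subtype.val hv.2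
          simp only
          rw [← hdl]
          exact List.dropLast_append_getLast _
        · -- right inverse
          intro y hy
          simp
      · intro v hv
        simp only [Finset.mem_coe, Finset.mem_filter, Finset.mem_univ, true_and] at hv ⊢
        have hvne : v.1 ≠ [] := vec_ne_nil (by omega) v
        have : v.1.dropLast <+: v.1 := ⟨[v.1.getLast hvne], List.dropLast_append_getLast hvne⟩
        exact hv.prefix this
    rw [key, ih]
    ring

lemma head?_dropLast_of_ne_nil {α : Type*} {l : List α} (h : l.dropLast ≠ []) :
    l.dropLast.head? = l.head? := by
  rcases l with _ | ⟨a, t⟩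
  · simp at h
  · rcases t with _ | ⟨b, t⟩
    · simp at h
    · simp

lemma cnt_one_good (k : ℕ) : cnt k 1 GoodP = 2 * k := by
  unfold cnt
  rw [Finset.filter_true_of_mem, Finset.card_univ, card_vector_letter, pow_one]
  intro v _
  rcases v with ⟨_ | ⟨a, _ | ⟨b, t⟩⟩, hv⟩
  · simp at hv
  · refine ⟨by simp [Reduced, List.Chain'], ?_⟩
    simpa using (ne_linv_self a)
  · simp at hv

lemma cnt_one_ep (k : ℕ) : cnt k 1 EP = 0 := by
  unfold cnt
  rw [Finset.card_eq_zero, Finset.filter_eq_empty_iff]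
  intro v _
  rcases v with ⟨_ | ⟨a, _ | ⟨b, t⟩⟩, hv⟩
  · simp at hv
  · rintro ⟨-, h⟩
    simp at h
  · simp at hv

lemma cnt_bad_succ (k n : ℕ) (hn : 1 ≤ n) : cnt k (n + 1) BadP = cnt k n EP := by
  unfold cnt
  refine Finset.card_bij' (fun v _ => dLast v)
    (fun u _ => (⟨u.1 ++ [linv (u.1.head (vec_ne_nil hn u))], by simp [u.2]⟩ :
      LVec k (n+1))) ?_ ?_ ?_ ?_
  · -- i maps into target : EP (dropLast)
    intro v hv
    simp only [Finset.mem_filter, Finset.mem_univ, true_and] at hv ⊢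
    obtain ⟨hred, hbad⟩ := hv
    have hvne : v.1 ≠ [] := vec_ne_nil (by omega) v
    have hdne : v.1.dropLast ≠ [] := by
      intro h
      have : v.1.dropLast.length = 0 := by rw [h]; rfl
      rw [List.length_dropLast, v.2] at this
      omega
    have hsplit : v.1.dropLast ++ [v.1.getLast hvne] = v.1 := List.dropLast_append_getLast hvne
    have hred' := hred
    rw [← hsplit] at hred'
    obtain ⟨hredd, hcond⟩ := reduced_concat_iff.mp hred'
    refine ⟨hredd, ?_⟩
    -- head of dropLast = head of v = linv (getLast v)
    have hhead : v.1.dropLast.head? = v.1.head? := head?_dropLast_of_ne_nil hdne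
    rw [List.head?_eq_head hvne, List.getLast?_eq_getLast_of_ne_nil hvne] at hbad
    simp only [Option.map_some, Option.some.injEq] at hbad
    intro heq
    simp only [dLast] at heq
    rw [hhead, List.head?_eq_head hvne, hbad,
        List.getLast?_eq_getLast_of_ne_nil hdne] at heq
    have hlast : v.1.dropLast.getLast hdne = linv (v.1.getLast hvne) := Option.some.inj heq
    have := hcond _ (List.getLast?_eq_getLast_of_ne_nil hdne)
    rw [hlast, linv_linv] at this
    exact this rfl
  · -- j maps into source : BadP (u ++ [linv (head u)])
    intro u hu
    simp only [Finset.mem_filter, Finset.mem_univ, true_and] at hu ⊢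
    obtain ⟨hred, hep⟩ := hu
    have hne : u.1 ≠ [] := vec_ne_nil hn u
    constructor
    · refine reduced_concat_iff.mpr ⟨hred, ?_⟩
      intro x hx
      rw [List.getLast?_eq_getLast_of_ne_nil hne] at hx
      cases hx
      intro hc
      apply hep
      rw [List.getLast?_eq_getLast_of_ne_nil hne, List.head?_eq_head hne,
        linv_injective hc]
    · try dsimp only
      rw [List.getLast?_concat]
      have : (u.1 ++ [linv (u.1.head hne)]).head? = u.1.head? := by
        rw [List.head?_append, List.head?_eq_head hne]; rfl
      rw [this, List.head?_eq_head hne]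
      simp
  · -- left inverse
    intro v hv
    simp only [Finset.mem_filter, Finset.mem_univ, true_and] at hv
    obtain ⟨hred, hbad⟩ := hv
    have hvne : v.1 ≠ [] := vec_ne_nil (by omega) v
    have hdne : v.1.dropLast ≠ [] := by
      intro h
      have : v.1.dropLast.length = 0 := by rw [h]; rfl
      rw [List.length_dropLast, v.2] at this
      omega
    apply Subtype.ext
    simp only [dLast]
    rw [List.head?_eq_head hvne, List.getLast?_eq_getLast_of_ne_nil hvne] at hbad
    simp only [Option.map_some, Option.some.injEq] at hbad
    have hhead : v.1.dropLast.head (by exact hdne) = v.1.head hvne := by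
      have := head?_dropLast_of_ne_nil hdne
      rw [List.head?_eq_head hvne, List.head?_eq_head hdne] at this
      exact Option.some.inj this
    rw [hhead, hbad, linv_linv]
    exact List.dropLast_append_getLast hvne
  · -- right inverse
    intro u hu
    apply Subtype.ext
    simp [dLast]

lemma cnt_dg_succ (k n : ℕ) (hn : 1 ≤ n) : cnt k (n + 1) DgP = cnt k n GoodP := by
  unfold cnt
  refine Finset.card_bij' (fun v _ => dLast v)
    (fun u _ => (⟨u.1 ++ [u.1.head (vec_ne_nil hn u)], by simp [u.2]⟩ :
      LVec k (n+1))) ?_ ?_ ?_ ?_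
  · -- i maps into target : GoodP (dropLast)
    intro v hv
    simp only [Finset.mem_filter, Finset.mem_univ, true_and] at hv ⊢
    obtain ⟨hred, hdg⟩ := hv
    have hvne : v.1 ≠ [] := vec_ne_nil (by omega) v
    have hdne : v.1.dropLast ≠ [] := by
      intro h
      have : v.1.dropLast.length = 0 := by rw [h]; rfl
      rw [List.length_dropLast, v.2] at this
      omega
    have hsplit : v.1.dropLast ++ [v.1.getLast hvne] = v.1 := List.dropLast_append_getLast hvne
    have hred' := hred
    rw [← hsplit] at hred'
    obtain ⟨hredd, hcond⟩ := reduced_concat_iff.mp hred'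
    refine ⟨hredd, ?_⟩
    rw [List.getLast?_eq_getLast_of_ne_nil hvne, List.head?_eq_head hvne] at hdg
    have hdg' : v.1.getLast hvne = v.1.head hvne := Option.some.inj hdg
    have hhead : v.1.dropLast.head? = v.1.head? := head?_dropLast_of_ne_nil hdne
    simp only [dLast]
    rw [hhead, List.head?_eq_head hvne, List.getLast?_eq_getLast_of_ne_nil hdne]
    simp only [Option.map_some, ne_eq, Option.some.injEq]
    intro hc
    have := hcond _ (List.getLast?_eq_getLast_of_ne_nil hdne)
    rw [hdg'] at this
    exact this hc
  · -- j maps into source : DgP (u ++ [head u])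
    intro u hu
    simp only [Finset.mem_filter, Finset.mem_univ, true_and] at hu ⊢
    obtain ⟨hred, hgood⟩ := hu
    have hne : u.1 ≠ [] := vec_ne_nil hn u
    constructor
    · refine reduced_concat_iff.mpr ⟨hred, ?_⟩
      intro x hx
      rw [List.getLast?_eq_getLast_of_ne_nil hne] at hx
      cases hx
      intro hc
      apply hgood
      rw [List.head?_eq_head hne, List.getLast?_eq_getLast_of_ne_nil hne, Option.map_some]
      exact congrArg some hc
    · try dsimp only
      rw [List.getLast?_concat]
      have : (u.1 ++ [u.1.head hne]).head? = u.1.head? := by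
        rw [List.head?_append, List.head?_eq_head hne]; rfl
      rw [this, List.head?_eq_head hne]
  · -- left inverse
    intro v hv
    simp only [Finset.mem_filter, Finset.mem_univ, true_and] at hv
    obtain ⟨hred, hdg⟩ := hv
    have hvne : v.1 ≠ [] := vec_ne_nil (by omega) v
    have hdne : v.1.dropLast ≠ [] := by
      intro h
      have : v.1.dropLast.length = 0 := by rw [h]; rfl
      rw [List.length_dropLast, v.2] at this
      omega
    apply Subtype.ext
    simp only [dLast]
    rw [List.getLast?_eq_getLast_of_ne_nil hvne, List.head?_eq_head hvne] at hdg
    have hdg' : v.1.getLast hvne = v.1.head hvne := Option.some.inj hdg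
    have hhead : v.1.dropLast.head (by exact hdne) = v.1.head hvne := by
      have := head?_dropLast_of_ne_nil hdne
      rw [List.head?_eq_head hvne, List.head?_eq_head hdne] at this
      exact Option.some.inj this
    rw [hhead, ← hdg']
    exact List.dropLast_append_getLast hvne
  · -- right inverse
    intro u hu
    apply Subtype.ext
    simp [dLast]

lemma split_good_bad (k n : ℕ) : cnt k n GoodP + cnt k n BadP = cnt k n Reduced := by
  have h := cnt_split k n Reduced (fun w => w.head? = w.getLast?.map linv)
  have e1 : cnt k n GoodP
      = cnt k n (fun w => Reduced w ∧ ¬ (w.head? = w.getLast?.map linv)) :=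
    cnt_congr (fun w _ => Iff.rfl)
  have e2 : cnt k n BadP
      = cnt k n (fun w => Reduced w ∧ (w.head? = w.getLast?.map linv)) :=
    cnt_congr (fun w _ => Iff.rfl)
  omega

lemma split_dg_ep (k n : ℕ) : cnt k n DgP + cnt k n EP = cnt k n Reduced := by
  have h := cnt_split k n Reduced (fun w => w.getLast? = w.head?)
  have e1 : cnt k n DgP
      = cnt k n (fun w => Reduced w ∧ (w.getLast? = w.head?)) :=
    cnt_congr (fun w _ => Iff.rfl)
  have e2 : cnt k n EP
      = cnt k n (fun w => Reduced w ∧ ¬ (w.getLast? = w.head?)) :=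
    cnt_congr (fun w _ => Iff.rfl)
  omega

lemma cnt_rec (k n : ℕ) (hn : 1 ≤ n) :
    cnt k (n+2) GoodP + cnt k (n+1) Reduced = cnt k (n+2) Reduced + cnt k n GoodP := by
  have h1 := split_good_bad k (n+2)
  have h2 : cnt k (n+2) BadP = cnt k (n+1) EP := cnt_bad_succ k (n+1) (by omega)
  have h3 := split_dg_ep k (n+1)
  have h4 : cnt k (n+1) DgP = cnt k n GoodP := cnt_dg_succ k n hn
  omega

lemma cnt_two_good (k : ℕ) : cnt k 2 GoodP = 2 * k * (2 * k - 1) := by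
  have h1 := split_good_bad k 2
  have h2 : cnt k 2 BadP = cnt k 1 EP := cnt_bad_succ k 1 le_rfl
  have h3 := cnt_one_ep k
  have h4 : cnt k 2 Reduced = 2 * k * (2 * k - 1) := by
    have := cnt_red k 1
    rwa [pow_one] at this
  rw [← h4]
  omega

lemma main_count (k : ℕ) (hk : 1 ≤ k) : ∀ n : ℕ, 1 ≤ n →
    (cnt k n GoodP : ℤ) = (2*(k:ℤ)-1)^n + k + ((k:ℤ)-1)*(-1)^n := by
  have hk' : (1:ℕ) ≤ 2*k := by omega
  intro n
  induction n using Nat.strong_induction_on with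
  | _ n ih =>
    match n with
    | 0 => intro h; exact absurd h (by omega)
    | 1 =>
      intro _
      rw [cnt_one_good]
      push_cast
      ring
    | 2 =>
      intro _
      rw [cnt_two_good]
      push_cast [Nat.cast_sub hk']
      ring
    | (m+3) =>
      intro _
      have hrec := cnt_rec k (m+1) (by omega)
      have ihm := ih (m+1) (by omega) (by omega)
      have hr1 := cnt_red k (m+2)
      have hr2 := cnt_red k (m+1)
      have hz : (cnt k (m+3) GoodP : ℤ)
          = (cnt k (m+1) GoodP : ℤ)
            + ((cnt k (m+3) Reduced : ℤ) - (cnt k (m+2) Reduced : ℤ)) := by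
        have : ((cnt k (m+3) GoodP : ℤ) + (cnt k (m+2) Reduced : ℤ))
            = (cnt k (m+3) Reduced : ℤ) + (cnt k (m+1) GoodP : ℤ) := by
          exact_mod_cast hrec
        linarith
      rw [hz, ihm, hr1, hr2]
      push_cast [Nat.cast_sub hk']
      ring


lemma gam_eq (k n : ℕ) (hn : 1 ≤ n) : gam (Ck k) n = cnt k n GoodP := by
  have e : {w : List (Letter k) // w ∈ Ck k ∧ w.length = n}
      ≃ {v : LVec k n // GoodP v.1} :=
    { toFun := fun w => ⟨⟨w.1, w.2.2⟩, by
        have hne : w.1 ≠ [] := by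
          intro h
          have := w.2.2
          rw [h] at this
          simp at this
          omega
        exact (cyclRed_iff hne).mp w.2.1⟩
      invFun := fun v => ⟨v.1.1, by
        have hne : v.1.1 ≠ [] := by
          intro h
          have := v.1.2
          rw [h] at this
          simp at this
          omega
        exact ⟨(cyclRed_iff hne).mpr v.2, v.1.2⟩⟩
      left_inv := fun w => rfl
      right_inv := fun v => rfl }
  unfold gam cnt
  rw [Nat.card_congr e, Nat.card_eq_fintype_card, Fintype.card_subtype]

/-- Rivin's formula: the number of cyclically reduced words of length n ≥ 1 in
F(a_1,...,a_k) equals (2k-1)^n + 1 + (k-1)(1+(-1)^n). -/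
theorem stmt0 (k : ℕ) (hk : 2 ≤ k) (n : ℕ) (hn : 1 ≤ n) :
    (gam (Ck k) n : ℤ) = (2 * (k : ℤ) - 1) ^ n + 1 + ((k : ℤ) - 1) * (1 + (-1) ^ n) := by
  rw [gam_eq k n hn, main_count k (by omega) n hn]
  ring
end

section
/- The number of cyclically reduced words of length n > 1 over the alphabet {a, b, b^{-1}} (in the modular group setting) is 0 if n is odd and 2·2^{n/2} if n is even. -/
open Filter

/-- The alphabet A = {a, b, b⁻¹} for the modular group M = ⟨a,b | a² = b³ = 1⟩. -/
inductive ML : Type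
  | a : ML
  | b : ML
  | binv : ML
  deriving DecidableEq

/-- A word over A is reduced iff it avoids aa, bb, b⁻¹b⁻¹, bb⁻¹, b⁻¹b, i.e. the
letter a alternates with letters from {b, b⁻¹}. -/
def MRed (w : List ML) : Prop :=
  w.Chain' (fun x y => (x = ML.a) ↔ ¬(y = ML.a))

/-- A word is cyclically reduced iff all its cyclic permutations are reduced. -/
def MCyclRed (w : List ML) : Prop := ∀ r : ℕ, MRed (w.rotate r)

/-- Number of words of length n in a set Q of words over A. -/
noncomputable def mgam (Q : Set (List ML)) (n : ℕ) : ℕ :=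
  Nat.card {w : List ML // w ∈ Q ∧ w.length = n}

namespace Stmt2Aux

theorem get_congr (w : List ML) {i j : ℕ} (hi : i < w.length) (hj : j < w.length)
    (h : i = j) : w.get ⟨i, hi⟩ = w.get ⟨j, hj⟩ := by subst h; rfl

theorem chain'_iff_get {R : ML → ML → Prop} {l : List ML} : List.Chain' R l ↔
    ∀ (i : ℕ) (h : i < l.length - 1), R (l.get ⟨i, by omega⟩) (l.get ⟨i + 1, by omega⟩) := by
  rw [List.Chain', List.isChain_iff_getElem]
  constructor
  · intro h i hi; exact h i (by omega)
  · intro h i hi; exact h i (by omega)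

/-- Index characterization of cyclic reducedness for words of length ≥ 2. -/
theorem mcyclred_iff {w : List ML} (h2 : 2 ≤ w.length) :
    MCyclRed w ↔ ∀ i (hi : i < w.length) j (hj : j < w.length), j = (i + 1) % w.length →
      ((w.get ⟨i, hi⟩ = ML.a) ↔ ¬(w.get ⟨j, hj⟩ = ML.a)) := by
  constructor
  · intro h i hi j hj hij
    have hc := (chain'_iff_get).mp (h i)
    have h0 : 0 < (w.rotate i).length - 1 := by rw [List.length_rotate]; omega
    have key := hc 0 h0
    rw [List.get_rotate, List.get_rotate] at key
    rw [get_congr w hi (Nat.mod_lt _ (by omega)) (by simp [Nat.mod_eq_of_lt hi] : i = (((⟨0, by rw [List.length_rotate]; omega⟩ : Fin (w.rotate i).length) : ℕ) + i) % w.length),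
        get_congr w hj (Nat.mod_lt _ (by omega)) (by simp [hij, Nat.add_comm] : j = (((⟨0 + 1, by rw [List.length_rotate]; omega⟩ : Fin (w.rotate i).length) : ℕ) + i) % w.length)]
    exact key
  · intro h r
    rw [MRed, chain'_iff_get]
    intro j hj
    rw [List.length_rotate] at hj
    rw [List.get_rotate, List.get_rotate]
    refine h ((j + r) % w.length) (Nat.mod_lt _ (by omega)) ((j + 1 + r) % w.length)
      (Nat.mod_lt _ (by omega)) ?_
    rw [Nat.mod_add_mod, Nat.add_right_comm]

def bb (s : Bool) : ML := if s then ML.b else ML.binv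

theorem bb_ne_a (s : Bool) : bb s ≠ ML.a := by cases s <;> simp [bb]

theorem bb_inj {s t : Bool} (h : bb s = bb t) : s = t := by
  cases s <;> cases t <;> simp_all [bb]

def fw (m : ℕ) (c : Bool) (s : Fin m → Bool) : List ML :=
  List.ofFn fun i : Fin (2 * m) =>
    if decide (i.val % 2 = 0) = c then ML.a else bb (s ⟨i.val / 2, by omega⟩)

theorem fw_length (m : ℕ) (c : Bool) (s : Fin m → Bool) : (fw m c s).length = 2 * m :=
  List.length_ofFn

theorem fw_get (m : ℕ) (c : Bool) (s : Fin m → Bool) (i : ℕ) (hi : i < 2 * m) :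
    (fw m c s).get ⟨i, by rw [fw_length]; exact hi⟩ =
      if decide (i % 2 = 0) = c then ML.a else bb (s ⟨i / 2, by omega⟩) := by
  simp [fw, List.get_ofFn]

theorem fw_get_a (m : ℕ) (c : Bool) (s : Fin m → Bool) (i : ℕ) (hi : i < 2 * m) :
    ((fw m c s).get ⟨i, by rw [fw_length]; exact hi⟩ = ML.a) ↔ (decide (i % 2 = 0) = c) := by
  rw [fw_get m c s i hi]
  split
  · simp_all
  · simp_all [bb_ne_a]

theorem fw_cycl (m : ℕ) (hm : 1 ≤ m) (c : Bool) (s : Fin m → Bool) :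
    MCyclRed (fw m c s) := by
  rw [mcyclred_iff (by rw [fw_length]; omega)]
  intro i hi j hj hij
  rw [fw_length] at hi hj
  rw [fw_get_a m c s i hi, fw_get_a m c s j hj]
  have hpar : (i % 2 = 0 ∧ j % 2 = 1) ∨ (i % 2 = 1 ∧ j % 2 = 0) := by
    rw [fw_length] at hij
    rcases Nat.lt_or_ge (i + 1) (2 * m) with h | h
    · rw [Nat.mod_eq_of_lt h] at hij; omega
    · have h1 : i + 1 = 2 * m := by omega
      rw [h1, Nat.mod_self] at hij; omega
  rcases hpar with ⟨h1, h2⟩ | ⟨h1, h2⟩ <;> rw [h1, h2] <;> cases c <;> simp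

theorem key_all (w : List ML) (h2 : 2 ≤ w.length) (hcyc : MCyclRed w) (c : Bool)
    (hc0 : (w.get ⟨0, by omega⟩ = ML.a) ↔ (c = true)) :
    ∀ i (hi : i < w.length), ((w.get ⟨i, hi⟩ = ML.a) ↔ ((i % 2 = 0) ↔ (c = true))) := by
  intro i
  induction i with
  | zero =>
    intro hi
    simpa using hc0
  | succ i ih =>
    intro hi
    have hi' : i < w.length := by omega
    have hR := (mcyclred_iff h2).mp hcyc i hi' (i + 1) hi (by rw [Nat.mod_eq_of_lt hi])
    have hprev := ih hi'
    have hpar : (i % 2 = 0 ∧ (i + 1) % 2 = 1) ∨ (i % 2 = 1 ∧ (i + 1) % 2 = 0) := by omega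
    rcases hpar with ⟨h1, h2'⟩ | ⟨h1, h2'⟩ <;> rw [h1] at hprev <;> rw [h2'] <;>
      cases c <;> simp_all <;> try tauto

theorem even_of_cycl (w : List ML) (h2 : 2 ≤ w.length) (hcyc : MCyclRed w) :
    Even w.length := by
  by_contra hodd
  obtain ⟨c, hc0⟩ : ∃ c : Bool, ((w.get ⟨0, by omega⟩ = ML.a) ↔ (c = true)) :=
    ⟨decide (w.get ⟨0, by omega⟩ = ML.a), by simp⟩
  have hlast : w.length - 1 < w.length := by omega
  have hR := (mcyclred_iff h2).mp hcyc (w.length - 1) hlast 0 (by omega)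
    (by rw [Nat.sub_add_cancel (by omega), Nat.mod_self])
  have k1 := key_all w h2 hcyc c hc0 (w.length - 1) hlast
  have k0 := key_all w h2 hcyc c hc0 0 (by omega)
  rw [Nat.not_even_iff] at hodd
  have hmod : (w.length - 1) % 2 = 0 := by omega
  rw [hmod] at k1
  simp only [Nat.zero_mod] at k0
  tauto

theorem fw_surj (m : ℕ) (hm1 : 1 ≤ m) (w : List ML) (hcyc : MCyclRed w)
    (hlen : w.length = 2 * m) : ∃ c s, fw m c s = w := by
  have h2 : 2 ≤ w.length := by omega
  have h0 : 0 < w.length := by omega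
  obtain ⟨c, hc0⟩ : ∃ c : Bool, ((w.get ⟨0, by omega⟩ = ML.a) ↔ (c = true)) :=
    ⟨decide (w.get ⟨0, by omega⟩ = ML.a), by simp⟩
  have key := key_all w h2 hcyc c hc0
  refine ⟨c, fun j => decide (w.get ⟨2 * j.val + (if c then 1 else 0),
    by have := j.2; cases c <;> simp <;> omega⟩ = ML.b), ?_⟩
  apply List.ext_get (by rw [fw_length]; omega)
  intro i hifw hiw
  rw [fw_length] at hifw
  rw [fw_get m c _ i hifw]
  by_cases hia : w.get ⟨i, hiw⟩ = ML.a
  · have hcond : decide (i % 2 = 0) = c := by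
      have := (key i hiw).mp hia
      cases c <;> simp_all
    rw [if_pos hcond, hia]
  · have hne : decide (i % 2 = 0) ≠ c := by
      intro hh
      apply hia
      apply (key i hiw).mpr
      cases c <;> simp_all
    rw [if_neg hne]
    have hidx : 2 * (i / 2) + (if c then 1 else 0) = i := by
      cases c <;> simp_all <;> omega
    have hlt : 2 * (i / 2) + (if c then 1 else 0) < w.length := by omega
    have hgc : w.get ⟨2 * (i / 2) + (if c then 1 else 0), hlt⟩ = w.get ⟨i, hiw⟩ :=
      get_congr w hlt hiw hidx
    show bb (decide (w.get ⟨2 * (i / 2) + (if c then 1 else 0), _⟩ = ML.b)) = _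
    rw [hgc]
    cases hwv : w.get ⟨i, hiw⟩ <;> simp_all [bb]

theorem fw_inj (m : ℕ) (hm1 : 1 ≤ m) {c c' : Bool} {s s' : Fin m → Bool}
    (heq : fw m c s = fw m c' s') : c = c' ∧ s = s' := by
  have hget : ∀ i (hi : i < 2 * m),
      (if decide (i % 2 = 0) = c then ML.a else bb (s ⟨i / 2, by omega⟩)) =
      (if decide (i % 2 = 0) = c' then ML.a else bb (s' ⟨i / 2, by omega⟩)) := by
    intro i hi
    rw [← fw_get m c s i hi, ← fw_get m c' s' i hi]
    exact (List.ext_get_iff.mp heq).2 i _ _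
  have hc : c = c' := by
    have h0 := hget 0 (by omega)
    cases c with
    | false => cases c' with
      | false => rfl
      | true =>
        exfalso
        rw [if_neg (by decide), if_pos (by decide)] at h0
        exact bb_ne_a _ h0
    | true => cases c' with
      | false =>
        exfalso
        rw [if_pos (by decide), if_neg (by decide)] at h0
        exact bb_ne_a _ h0.symm
      | true => rfl
  subst hc
  refine ⟨rfl, funext fun j => ?_⟩
  have hjlt : 2 * j.val + (if c then 1 else 0) < 2 * m := by
    have := j.2; cases c <;> simp <;> omega
  have hj := hget (2 * j.val + (if c then 1 else 0)) hjlt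
  have hmod : decide ((2 * j.val + (if c then 1 else 0)) % 2 = 0) ≠ c := by
    cases c <;> simp <;> omega
  rw [if_neg hmod, if_neg hmod] at hj
  have hdiv : ((2 * j.val + (if c then 1 else 0)) / 2) = j.val := by
    cases c <;> simp <;> omega
  have hfin : (⟨(2 * j.val + (if c then 1 else 0)) / 2, by omega⟩ : Fin m) = j :=
    Fin.ext hdiv
  have := bb_inj hj
  rwa [hfin] at this

end Stmt2Aux

open Stmt2Aux in
/-- The number of cyclically reduced words of length n > 1 over {a, b, b⁻¹} is 0 for
odd n and 2·2^(n/2) for even n. -/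
theorem stmt2 (n : ℕ) (hn : 1 < n) :
    mgam {w | MCyclRed w} n = if Even n then 2 * 2 ^ (n / 2) else 0 := by
  by_cases h : Even n
  · rw [if_pos h]
    obtain ⟨m, hm⟩ := h
    have hm2 : n = 2 * m := by omega
    have hm1 : 1 ≤ m := by omega
    have hbij : Function.Bijective (fun p : Bool × (Fin m → Bool) =>
        (⟨fw m p.1 p.2, fw_cycl m hm1 p.1 p.2, by rw [fw_length]; omega⟩ :
          {w : List ML // w ∈ {w | MCyclRed w} ∧ w.length = n})) := by
      constructor
      · rintro ⟨c, s⟩ ⟨c', s'⟩ hFeq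
        have heq : fw m c s = fw m c' s' := congrArg Subtype.val hFeq
        obtain ⟨hc, hs⟩ := fw_inj m hm1 heq
        rw [Prod.mk.injEq]
        exact ⟨hc, hs⟩
      · rintro ⟨w, hcyc, hwlen⟩
        obtain ⟨c, s, hfw⟩ := fw_surj m hm1 w hcyc (by omega)
        exact ⟨(c, s), Subtype.ext hfw⟩
    have hcard := Nat.card_congr (Equiv.ofBijective _ hbij)
    rw [mgam, ← hcard, Nat.card_eq_fintype_card]
    have hdiv : n / 2 = m := by omega
    rw [hdiv]
    simp [Fintype.card_fun]
  · rw [if_neg h]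
    have hempty : IsEmpty {w : List ML // w ∈ {w | MCyclRed w} ∧ w.length = n} := by
      refine ⟨fun ⟨w, hcyc, hwlen⟩ => ?_⟩
      exact h (hwlen ▸ even_of_cycl w (by omega) hcyc)
    rw [mgam]
    exact @Nat.card_of_isEmpty _ hempty
end

section
/- Let P_k ⊆ C_k be the set of non-primitive cyclically reduced words in F(a_1,...,a_k). Then γ(n, C_k \ P_k) ≥ (2k-2)(2k-3)^{n-2} for all n ≥ 2, and consequently the lower genericity entropy t'(P_k) ≥ log(2k-3)/log(2k-1). -/
open Filter

/-- Primitive element of a free group: image of a generator under an automorphism. -/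
def Primitive {k : ℕ} (g : FreeGroup (Fin k)) : Prop :=
  ∃ (φ : FreeGroup (Fin k) ≃* FreeGroup (Fin k)) (i : Fin k), φ (FreeGroup.of i) = g


namespace Stmt10Aux
variable {k : ℕ}

lemma ne_linv_of_fst_ne {x y : Letter k} (h : y.1 ≠ x.1) : y ≠ linv x := by
  intro he; exact h (by rw [he]; rfl)

lemma linv_ne_self (x : Letter k) : x ≠ linv x := by
  intro he
  have : x.2 = !x.2 := congrArg Prod.snd he
  simp at this

abbrev A (k : ℕ) := {x : Letter k // x.1.val ≠ 0}

def e2 (hk : 1 ≤ k) : {i : Fin k // i.val ≠ 0} ≃ Fin (k - 1) where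
  toFun i := ⟨i.1.val - 1, by have := i.1.isLt; have := i.2; omega⟩
  invFun j := ⟨⟨j.val + 1, by have := j.isLt; omega⟩, by simp⟩
  left_inv i := by
    have := i.2
    ext
    simp only []
    omega
  right_inv j := by ext; simp

def e1 : A k ≃ ({i : Fin k // i.val ≠ 0} × Bool) where
  toFun x := (⟨x.1.1, x.2⟩, x.1.2)
  invFun p := ⟨(p.1.1, p.2), p.1.2⟩
  left_inv := by rintro ⟨⟨i, b⟩, h⟩; rfl
  right_inv := by rintro ⟨⟨i, h⟩, b⟩; rfl

lemma cardA (hk : 1 ≤ k) : Fintype.card (A k) = 2 * k - 2 := by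
  rw [Fintype.card_congr (e1.trans (Equiv.prodCongr (e2 hk) (Equiv.refl Bool)))]
  simp [Fintype.card_prod]
  omega

def linvA (x : A k) : A k := ⟨linv x.1, x.2⟩

variable {m : ℕ}

def wseq (E : A k ≃ Fin (m + 1)) (f : Fin (m + 1)) (g : ℕ → Fin m) : ℕ → A k
  | 0 => E.symm f
  | (i + 1) => E.symm ((E (linvA (wseq E f g i))).succAbove (g i))

lemma wseq_ne (E : A k ≃ Fin (m + 1)) (f : Fin (m + 1)) (g : ℕ → Fin m) (i : ℕ) :
    wseq E f g (i + 1) ≠ linvA (wseq E f g i) := by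
  intro h
  have h2 : (E (linvA (wseq E f g i))).succAbove (g i) = E (linvA (wseq E f g i)) := by
    conv_rhs => rw [← h]
    simp [wseq]
  exact Fin.succAbove_ne _ _ h2

lemma fix_hom (z : Fin k) (f : FreeGroup (Fin k) →* FreeGroup (Fin k))
    (hf : ∀ i : Fin k, i ≠ z → f (FreeGroup.of i) = FreeGroup.of i)
    (v : List (Letter k)) (hv : ∀ x ∈ v, x.1 ≠ z) :
    f (FreeGroup.mk v) = FreeGroup.mk v := by
  induction v with
  | nil => rw [← FreeGroup.one_eq_mk, map_one]
  | cons x v ih =>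
      have hx : x.1 ≠ z := hv x (List.mem_cons_self)
      have hsplit : FreeGroup.mk (x :: v) = FreeGroup.mk [x] * FreeGroup.mk v := by
        rw [FreeGroup.mul_mk]; rfl
      rw [hsplit, map_mul, ih (fun y hy => hv y (List.mem_cons_of_mem _ hy))]
      congr 1
      rcases x with ⟨i, b⟩
      cases b
      · have h1 : FreeGroup.mk [((i : Fin k), false)] = (FreeGroup.of i)⁻¹ := by
          rw [FreeGroup.of, FreeGroup.inv_mk]
          simp [FreeGroup.invRev]
        rw [h1, map_inv, hf i hx]
      · rw [show FreeGroup.mk [((i : Fin k), true)] = FreeGroup.of i from rfl, hf i hx]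

lemma prim_word (z : Fin k) (v : List (Letter k)) (hv : ∀ x ∈ v, x.1 ≠ z) :
    Primitive (FreeGroup.mk ((z, true) :: v)) := by
  set g : FreeGroup (Fin k) := FreeGroup.mk v with hg
  set φ : FreeGroup (Fin k) →* FreeGroup (Fin k) :=
    FreeGroup.lift (fun i => if i = z then FreeGroup.of z * g else FreeGroup.of i) with hφ
  set ψ : FreeGroup (Fin k) →* FreeGroup (Fin k) :=
    FreeGroup.lift (fun i => if i = z then FreeGroup.of z * g⁻¹ else FreeGroup.of i) with hψ
  have hφ_of : ∀ i, i ≠ z → φ (FreeGroup.of i) = FreeGroup.of i := by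
    intro i hi; rw [hφ, FreeGroup.lift_apply_of, if_neg hi]
  have hψ_of : ∀ i, i ≠ z → ψ (FreeGroup.of i) = FreeGroup.of i := by
    intro i hi; rw [hψ, FreeGroup.lift_apply_of, if_neg hi]
  have hφg : φ g = g := fix_hom z φ hφ_of v hv
  have hψg : ψ g = g := fix_hom z ψ hψ_of v hv
  have h1 : ψ.comp φ = MonoidHom.id _ := by
    apply FreeGroup.ext_hom
    intro a
    by_cases ha : a = z
    · subst ha
      simp only [MonoidHom.comp_apply, MonoidHom.id_apply, hφ, FreeGroup.lift_apply_of, if_pos rfl,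
        if_true]
      rw [map_mul, hψg, hψ, FreeGroup.lift_apply_of, if_pos rfl, mul_assoc, inv_mul_cancel, mul_one]
    · simp only [MonoidHom.comp_apply, MonoidHom.id_apply, hφ_of a ha, hψ_of a ha]
  have h2 : φ.comp ψ = MonoidHom.id _ := by
    apply FreeGroup.ext_hom
    intro a
    by_cases ha : a = z
    · subst ha
      simp only [MonoidHom.comp_apply, MonoidHom.id_apply, hψ, FreeGroup.lift_apply_of, if_pos rfl,
        if_true]
      rw [map_mul, map_inv, hφg, hφ, FreeGroup.lift_apply_of, if_pos rfl, mul_assoc, mul_inv_cancel,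
        mul_one]
    · simp only [MonoidHom.comp_apply, MonoidHom.id_apply, hφ_of a ha, hψ_of a ha]
  refine ⟨MonoidHom.toMulEquiv φ ψ h1 h2, z, ?_⟩
  show φ (FreeGroup.of z) = _
  rw [hφ, FreeGroup.lift_apply_of, if_pos rfl]
  rw [show FreeGroup.of z = FreeGroup.mk [((z : Fin k), true)] from rfl, hg, FreeGroup.mul_mk]
  rfl

lemma cyclred_cons (a : Letter k) (l : List (Letter k))
    (ha : ∀ x ∈ l, x.1 ≠ a.1)
    (h2 : l.Chain' (fun x y => y ≠ linv x)) : CyclRed (a :: l) := by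
  have key : ∀ (j : ℕ) (hj : j < (a :: l).length),
      (a :: l)[(j + 1) % (a :: l).length]'(Nat.mod_lt _ (by omega)) ≠
        linv ((a :: l)[j]'hj) := by
    intro j hj
    by_cases hjn : j + 1 = (a :: l).length
    · have h0 : (j + 1) % (a :: l).length = 0 := by rw [hjn, Nat.mod_self]
      simp only [h0, List.getElem_cons_zero]
      match j with
      | 0 =>
          simp only [List.getElem_cons_zero]
          exact linv_ne_self a
      | (j' + 1) =>
          rw [List.getElem_cons_succ]
          exact ne_linv_of_fst_ne (ha _ (List.getElem_mem _)).symm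
    · have h0 : (j + 1) % (a :: l).length = j + 1 := Nat.mod_eq_of_lt (by omega)
      simp only [h0]
      match j with
      | 0 =>
          rw [List.getElem_cons_succ, List.getElem_cons_zero]
          exact fun he => (ha _ (List.getElem_mem _)) (by rw [he]; rfl)
      | (j' + 1) =>
          rw [List.getElem_cons_succ, List.getElem_cons_succ]
          have := List.isChain_iff_getElem.mp h2 j' (by simp at hj hjn ⊢; omega)
          simpa [List.get_eq_getElem] using this
  intro r
  unfold Reduced List.Chain'; rw [List.isChain_iff_getElem]
  intro i hi
  have hlen : ((a :: l).rotate r).length = l.length + 1 := by simp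
  have hi' : i + 1 < l.length + 1 := by omega
  rw [List.getElem_rotate, List.getElem_rotate]
  have hsucc : (i + 1 + r) % (a :: l).length =
      ((i + r) % (a :: l).length + 1) % (a :: l).length := by
    rw [show i + 1 + r = i + r + 1 by ring, Nat.add_mod (i + r) 1,
      Nat.mod_eq_of_lt (show 1 < (a :: l).length by simp; omega)]
  simp only [List.get_eq_getElem, hsucc]
  exact key _ (Nat.mod_lt _ (by simp))

lemma gam_lower (k n : ℕ) (hk : 2 ≤ k) (hn : 2 ≤ n) :
    (2 * k - 2) * (2 * k - 3) ^ (n - 2) ≤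
      gam (Ck k \ {w | w ∈ Ck k ∧ ¬ Primitive (FreeGroup.mk w)}) n := by
  classical
  set Q : Set (List (Letter k)) :=
    Ck k \ {w | w ∈ Ck k ∧ ¬ Primitive (FreeGroup.mk w)} with hQ
  haveI : Finite {w : List (Letter k) // w ∈ Q ∧ w.length = n} := by
    apply Finite.of_injective
      (fun w : {w : List (Letter k) // w ∈ Q ∧ w.length = n} =>
        fun i : Fin n => w.1.get (Fin.cast w.2.2.symm i))
    intro u v h
    apply Subtype.ext
    apply List.ext_get (by rw [u.2.2, v.2.2])
    intro i h1 h2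
    exact congrFun h ⟨i, by rw [← u.2.2]; exact h1⟩
  set m := 2 * k - 3 with hmdef
  have hm : 2 * k - 2 = m + 1 := by omega
  let E : A k ≃ Fin (m + 1) := Fintype.equivFinOfCardEq (by rw [cardA (by omega)]; omega)
  let z : Fin k := ⟨0, by omega⟩
  let extg : (Fin (n - 2) → Fin m) → ℕ → Fin m :=
    fun g j => if h : j < n - 2 then g ⟨j, h⟩ else ⟨0, by omega⟩
  -- the word associated to a parameter
  let wd : (Fin (m + 1) × (Fin (n - 2) → Fin m)) → List (Letter k) :=
    fun t => ((z, true) :: List.ofFn (fun i : Fin (n - 1) => (wseq E t.1 (extg t.2) i.val).1))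
  have hfst : ∀ (t : Fin (m + 1) × (Fin (n - 2) → Fin m)) (i : ℕ),
      (wseq E t.1 (extg t.2) i).1.1 ≠ z := by
    intro t i he
    exact (wseq E t.1 (extg t.2) i).2 (by rw [he])
  have hmem : ∀ (t : Fin (m + 1) × (Fin (n - 2) → Fin m)), wd t ∈ Q ∧ (wd t).length = n := by
    intro t
    have hcyc : CyclRed (wd t) := by
      apply cyclred_cons
      · intro x hx
        rw [List.mem_ofFn] at hx
        obtain ⟨i, rfl⟩ := hx
        exact fun he => hfst t i (by rw [he])
      · unfold List.Chain'; rw [List.isChain_iff_getElem]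
        intro i hi
        rw [List.getElem_ofFn, List.getElem_ofFn]
        exact fun he => wseq_ne E t.1 (extg t.2) i (Subtype.ext he)
    have hprim : Primitive (FreeGroup.mk (wd t)) := by
      apply prim_word
      intro x hx
      rw [List.mem_ofFn] at hx
      obtain ⟨i, rfl⟩ := hx
      exact hfst t i
    refine ⟨⟨hcyc, fun hc => hc.2 hprim⟩, ?_⟩
    simp [wd]
    omega
  let F : (Fin (m + 1) × (Fin (n - 2) → Fin m)) →
      {w : List (Letter k) // w ∈ Q ∧ w.length = n} :=
    fun t => ⟨wd t, hmem t⟩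
  have hFinj : Function.Injective F := by
    intro t t' h
    have hl : wd t = wd t' := congrArg Subtype.val h
    have htail : (List.ofFn (fun i : Fin (n - 1) => (wseq E t.1 (extg t.2) i.val).1)) =
        (List.ofFn (fun i : Fin (n - 1) => (wseq E t'.1 (extg t'.2) i.val).1)) :=
      (List.cons.injEq _ _ _ _ ▸ hl).2
    have hfun := List.ofFn_injective htail
    have hw : ∀ i : Fin (n - 1), wseq E t.1 (extg t.2) i.val = wseq E t'.1 (extg t'.2) i.val :=
      fun i => Subtype.ext (congrFun hfun i)
    have h1 : t.1 = t'.1 := by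
      have := hw ⟨0, by omega⟩
      simp only [wseq] at this
      exact E.symm.injective this
    have h2 : t.2 = t'.2 := by
      funext j
      have ha := hw ⟨j.val, by omega⟩
      have hb := hw ⟨j.val + 1, by omega⟩
      simp only [wseq, ha] at hb
      have hb2 := E.symm.injective hb
      have := Fin.succAbove_right_injective
        (p := E (linvA (wseq E t'.1 (extg t'.2) j.val))) (by exact hb2)
      simpa [extg, j.isLt] using this
    exact Prod.ext h1 h2
  calc (2 * k - 2) * (2 * k - 3) ^ (n - 2)
      = Nat.card (Fin (m + 1) × (Fin (n - 2) → Fin m)) := by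
        simp [Nat.card_eq_fintype_card, Fintype.card_fun]
        rw [hm, hmdef]
    _ ≤ gam Q n := Nat.card_le_card_of_injective F hFinj

lemma gam_upper (k n : ℕ) (Q : Set (List (Letter k))) : gam Q n ≤ (2 * k) ^ n := by
  have hinj : Function.Injective
      (fun w : {w : List (Letter k) // w ∈ Q ∧ w.length = n} =>
        fun i : Fin n => w.1.get (Fin.cast w.2.2.symm i)) := by
    intro u v h
    apply Subtype.ext
    apply List.ext_get (by rw [u.2.2, v.2.2])
    intro i h1 h2
    exact congrFun h ⟨i, by rw [← u.2.2]; exact h1⟩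
  calc gam Q n ≤ Nat.card (Fin n → Letter k) := Nat.card_le_card_of_injective _ hinj
    _ = (2 * k) ^ n := by
        rw [Nat.card_eq_fintype_card, Fintype.card_fun]
        simp [Fintype.card_prod]
        ring_nf

-- analytic part, assuming the counting bounds
lemma part2 (k : ℕ) (hk : 2 ≤ k) (Q : Set (List (Letter k)))
    (hlower : ∀ n : ℕ, 2 ≤ n → (2 * k - 2) * (2 * k - 3) ^ (n - 2) ≤ gam Q n) :
    Real.log (2 * (k : ℝ) - 3) / Real.log (2 * (k : ℝ) - 1) ≤
      liminf (fun n : ℕ =>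
        Real.log (gam Q n) / (n * Real.log (2 * (k : ℝ) - 1))) atTop := by
  have hk2 : (2 : ℝ) ≤ (k : ℝ) := by exact_mod_cast hk
  set L := Real.log (2 * (k : ℝ) - 1) with hLdef
  set c := Real.log (2 * (k : ℝ) - 3) with hcdef
  have hL : 0 < L := Real.log_pos (by linarith)
  have hc : 0 ≤ c := Real.log_nonneg (by linarith)
  set a : ℕ → ℝ := fun n => Real.log (gam Q n) / (n * L) with hadef
  set b : ℕ → ℝ := fun n => ((n : ℝ) - 2) / n * (c / L) with hbdef
  have hlow : ∀ᶠ n : ℕ in atTop, b n ≤ a n := by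
    filter_upwards [eventually_ge_atTop 2] with n hn
    have hn0 : (0 : ℝ) < n := by
      have : (2:ℝ) ≤ (n:ℝ) := by exact_mod_cast hn
      linarith
    have hgam : (2 * k - 3) ^ (n - 2) ≤ gam Q n :=
      le_trans (Nat.le_mul_of_pos_left _ (by omega)) (hlower n hn)
    have hcast : ((2 * k - 3 : ℕ) : ℝ) = 2 * (k : ℝ) - 3 := by
      push_cast [Nat.cast_sub (by omega : 3 ≤ 2 * k)]
      ring
    have hlog : ((n : ℝ) - 2) * c ≤ Real.log (gam Q n) := by
      have h1 : Real.log (((2 * k - 3 : ℕ) : ℝ) ^ (n - 2)) ≤ Real.log (gam Q n) := by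
        apply Real.log_le_log
        · apply pow_pos
          rw [hcast]; linarith
        · exact_mod_cast hgam
      rw [Real.log_pow, hcast, Nat.cast_sub hn] at h1
      push_cast at h1
      exact h1
    have hbn : b n = ((n : ℝ) - 2) * c / (n * L) := by
      simp only [hbdef]
      rw [div_mul_div_comm]
    rw [hbn]
    exact (div_le_div_iff_of_pos_right (mul_pos hn0 hL)).mpr hlog
  have hb_t : Tendsto b atTop (nhds (c / L)) := by
    have h1 : Tendsto (fun n : ℕ => 1 - 2 / (n : ℝ)) atTop (nhds 1) := by
      have := tendsto_const_div_atTop_nhds_zero_nat (2:ℝ)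
      have h2 := tendsto_const_nhds (x := (1:ℝ)) (f := atTop (α := ℕ)) |>.sub this
      simpa using h2
    have h2 := h1.mul_const (c / L)
    rw [one_mul] at h2
    apply h2.congr'
    filter_upwards [eventually_ge_atTop 1] with n hn
    have hn0 : (n : ℝ) ≠ 0 := by
      have : (1:ℝ) ≤ (n:ℝ) := by exact_mod_cast hn
      linarith
    rw [hbdef]
    congr 1
    field_simp
  have hup : ∀ᶠ n : ℕ in atTop, a n ≤ Real.log (2 * (k : ℝ)) / L := by
    filter_upwards [eventually_ge_atTop 1] with n hn
    have hn0 : (0 : ℝ) < n := by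
      have : (1:ℝ) ≤ (n:ℝ) := by exact_mod_cast hn
      linarith
    have h2k : (1 : ℝ) ≤ 2 * (k : ℝ) := by linarith
    have hGle : ((gam Q n : ℕ) : ℝ) ≤ (2 * (k : ℝ)) ^ n := by
      have := gam_upper k n Q
      calc ((gam Q n : ℕ) : ℝ) ≤ (((2 * k) ^ n : ℕ) : ℝ) := by exact_mod_cast this
        _ = (2 * (k : ℝ)) ^ n := by push_cast; ring
    have hlogG : Real.log (gam Q n) ≤ n * Real.log (2 * (k : ℝ)) := by
      rcases Nat.eq_zero_or_pos (gam Q n) with h0 | hpos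
      · rw [h0]
        simp only [Nat.cast_zero, Real.log_zero]
        exact mul_nonneg hn0.le (Real.log_nonneg h2k)
      · have h1 : Real.log ((gam Q n : ℕ) : ℝ) ≤ Real.log ((2 * (k : ℝ)) ^ n) :=
          Real.log_le_log (by exact_mod_cast hpos) hGle
        rwa [Real.log_pow] at h1
    rw [hadef]
    calc Real.log (gam Q n) / (n * L) ≤ (n * Real.log (2 * (k : ℝ))) / (n * L) :=
          (div_le_div_iff_of_pos_right (mul_pos hn0 hL)).mpr hlogG
      _ = Real.log (2 * (k : ℝ)) / L := by
          rw [mul_div_mul_left _ _ (ne_of_gt hn0)]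
  calc c / L = liminf b atTop := hb_t.liminf_eq.symm
    _ ≤ liminf a atTop :=
        Filter.liminf_le_liminf hlow hb_t.isBoundedUnder_ge
          (Filter.isCoboundedUnder_ge_of_eventually_le atTop hup)

end Stmt10Aux

open Stmt10Aux in
/-- If P_k ⊆ C_k is the set of non-primitive cyclically reduced words, then
γ(n, C_k \ P_k) ≥ (2k-2)(2k-3)^{n-2} for n ≥ 2, and consequently
t'(P_k) ≥ log(2k-3)/log(2k-1). -/
theorem stmt10 (k : ℕ) (hk : 2 ≤ k) :
    (∀ n : ℕ, 2 ≤ n →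
      (2 * k - 2) * (2 * k - 3) ^ (n - 2) ≤
        gam (Ck k \ {w | w ∈ Ck k ∧ ¬ Primitive (FreeGroup.mk w)}) n) ∧
    Real.log (2 * (k : ℝ) - 3) / Real.log (2 * (k : ℝ) - 1) ≤
      liminf (fun n : ℕ =>
        Real.log (gam (Ck k \ {w | w ∈ Ck k ∧ ¬ Primitive (FreeGroup.mk w)}) n) /
          (n * Real.log (2 * (k : ℝ) - 1))) atTop := by
  refine ⟨fun n hn => gam_lower k n hk hn, ?_⟩
  exact part2 k hk _ (fun n hn => gam_lower k n hk hn)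
end
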